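/- Let r ≥ 0 be an integer and suppose g satisfies Assumption A(r). Then for all n ∈ ℕ, all κ > 1 and all j ∈ {1, …, n}, q_j ≤ (r+1) κ_{σ(r)}^{r/(n(r+1))} σ(r)/δ(r), where x_j := κ_{σ(r)}^{(j/n−1)/(r+1)} for j = 0, …, n, M_j := max(|g'(x_{j−1})|, |g'(x_j)|) and q_j := M_j x_{j−1}/g(x_{j−1}). -/

import Mathlib

open Set

lemma iDW_congr_set {m : ℕ} {f : ℝ → ℝ} {x y : ℝ} (hx1 : x ≤ 1)
    (hy : y ∈ Set.Ico 0 x) :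
    iteratedDerivWithin m f (Set.Icc 0 x) y = iteratedDerivWithin m f (Set.Icc 0 1) y := by
  have h : Set.Icc (0:ℝ) x =ᶠ[nhds y] Set.Icc (0:ℝ) 1 := by
    rw [Filter.eventuallyEq_set]
    filter_upwards [isOpen_Iio.mem_nhds hy.2] with z hz
    simp only [Set.mem_Icc]
    exact ⟨fun ⟨h1, _⟩ => ⟨h1, le_trans (le_of_lt hz) hx1⟩,
      fun ⟨h1, _⟩ => ⟨h1, le_of_lt hz⟩⟩
  simp only [iteratedDerivWithin, iteratedFDerivWithin_congr_set h]

/-- Lower bound `δr * x^(r+1) ≤ g x`. -/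
lemma lower_bd (r : ℕ) (g : ℝ → ℝ) (δr : ℝ)
    (hgr : ContDiffOn ℝ (r+1) g (Set.Icc 0 1))
    (hmono : StrictMonoOn g (Set.Icc 0 1))
    (hg0 : ∀ j ≤ r, iteratedDerivWithin j g (Set.Icc 0 1) 0 = 0)
    (hδ : ∀ y ∈ Set.Icc (0:ℝ) 1,
      δr ≤ |iteratedDerivWithin (r+1) g (Set.Icc 0 1) y| / ((r+1).factorial : ℝ))
    {x : ℝ} (hx : 0 < x) (hx1 : x ≤ 1) :
    δr * x ^ (r+1) ≤ g x := by
  have hsub : Set.Icc (0:ℝ) x ⊆ Set.Icc 0 1 := Set.Icc_subset_Icc_right hx1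
  have hudx : UniqueDiffOn ℝ (Set.Icc (0:ℝ) x) := uniqueDiffOn_Icc hx
  have hf : ContDiffOn ℝ r g (Set.Icc 0 x) :=
    (hgr.of_le (by exact_mod_cast Nat.le_succ r)).mono hsub
  have hf' : DifferentiableOn ℝ (iteratedDerivWithin r g (Set.Icc 0 x)) (Set.Ioo 0 x) :=
    ((hgr.mono hsub).differentiableOn_iteratedDerivWithin
      (by exact_mod_cast Nat.lt_succ_self r) hudx).mono Set.Ioo_subset_Icc_self
  obtain ⟨x', hx', hTay⟩ := taylor_mean_remainder_lagrange hx.ne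
    (by rwa [Set.uIcc_of_le hx.le]) (by rwa [Set.uIcc_of_le hx.le, Set.uIoo_of_le hx.le])
  rw [Set.uIcc_of_le hx.le] at hTay
  rw [Set.uIoo_of_le hx.le] at hx'
  have hP : taylorWithinEval g r (Set.Icc 0 x) 0 x = 0 := by
    rw [taylor_within_apply]
    apply Finset.sum_eq_zero
    intro k hk
    rw [iDW_congr_set hx1 ⟨le_refl 0, hx⟩,
      hg0 k (Nat.lt_succ_iff.mp (Finset.mem_range.mp hk)), smul_zero]
  rw [hP, sub_zero, sub_zero,
    iDW_congr_set (m := r+1) hx1 ⟨hx'.1.le, hx'.2⟩] at hTay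
  set A := iteratedDerivWithin (r+1) g (Set.Icc 0 1) x' with hA
  have hg0' : g 0 = 0 := by
    have := hg0 0 (Nat.zero_le r); rwa [iteratedDerivWithin_zero] at this
  have hgx : 0 < g x := by
    have := hmono (Set.mem_Icc.mpr ⟨le_refl 0, zero_le_one⟩)
      (Set.mem_Icc.mpr ⟨hx.le, hx1⟩) hx
    rwa [hg0'] at this
  have hxp : (0:ℝ) < x ^ (r+1) := pow_pos hx _
  have hfac : (0:ℝ) < ((r+1).factorial : ℝ) := by positivity
  have hApos : 0 < A := by
    by_contra h
    push_neg at h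
    have : g x ≤ 0 := by
      rw [hTay]
      apply div_nonpos_of_nonpos_of_nonneg _ hfac.le
      exact mul_nonpos_of_nonpos_of_nonneg h (by positivity)
    linarith
  have hδ' : δr ≤ A / ((r+1).factorial : ℝ) := by
    have := hδ x' ⟨hx'.1.le, le_trans hx'.2.le hx1⟩
    rwa [abs_of_pos hApos] at this
  calc δr * x ^ (r+1) ≤ (A / ((r+1).factorial : ℝ)) * x ^ (r+1) :=
        mul_le_mul_of_nonneg_right hδ' hxp.le
    _ = g x := by rw [hTay]; ring

/-- Upper bound `|g'(x)| ≤ (r+1) σr x^r`. -/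
lemma deriv_bd (r : ℕ) (g : ℝ → ℝ) (σr : ℝ)
    (hgr : ContDiffOn ℝ (r+1) g (Set.Icc 0 1))
    (hg0 : ∀ j ≤ r, iteratedDerivWithin j g (Set.Icc 0 1) 0 = 0)
    (hσ : ∀ y ∈ Set.Icc (0:ℝ) 1,
      |iteratedDerivWithin (r+1) g (Set.Icc 0 1) y| / ((r+1).factorial : ℝ) ≤ σr)
    {x : ℝ} (hx : 0 < x) (hx1 : x ≤ 1) :
    |derivWithin g (Set.Icc 0 1) x| ≤ ((r:ℝ)+1) * σr * x ^ r := by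
  have hud1 : UniqueDiffOn ℝ (Set.Icc (0:ℝ) 1) := uniqueDiffOn_Icc one_pos
  have hfac : (0:ℝ) < ((r+1).factorial : ℝ) := by positivity
  obtain _ | s := r
  · -- r = 0
    have h1 : derivWithin g (Set.Icc 0 1) x = iteratedDerivWithin 1 g (Set.Icc 0 1) x := by
      rw [iteratedDerivWithin_one]
    have := hσ x ⟨hx.le, hx1⟩
    simp only [zero_add, Nat.factorial_one, Nat.cast_one, div_one] at this
    rw [h1]
    simpa using this
  · -- r = s+1
    set f := derivWithin g (Set.Icc (0:ℝ) 1) with hfdef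
    have hsub : Set.Icc (0:ℝ) x ⊆ Set.Icc 0 1 := Set.Icc_subset_Icc_right hx1
    have hudx : UniqueDiffOn ℝ (Set.Icc (0:ℝ) x) := uniqueDiffOn_Icc hx
    have hfC : ContDiffOn ℝ (s+1) f (Set.Icc 0 1) :=
      hgr.derivWithin hud1 (by exact_mod_cast le_refl (s+2))
    have hf : ContDiffOn ℝ s f (Set.Icc 0 x) :=
      (hfC.of_le (by exact_mod_cast Nat.le_succ s)).mono hsub
    have hf' : DifferentiableOn ℝ (iteratedDerivWithin s f (Set.Icc 0 x)) (Set.Ioo 0 x) :=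
      ((hfC.mono hsub).differentiableOn_iteratedDerivWithin
        (by exact_mod_cast Nat.lt_succ_self s) hudx).mono Set.Ioo_subset_Icc_self
    obtain ⟨x', hx', hTay⟩ := taylor_mean_remainder_lagrange hx.ne
      (by rwa [Set.uIcc_of_le hx.le]) (by rwa [Set.uIcc_of_le hx.le, Set.uIoo_of_le hx.le])
    rw [Set.uIcc_of_le hx.le] at hTay
    rw [Set.uIoo_of_le hx.le] at hx'
    have hP : taylorWithinEval f s (Set.Icc 0 x) 0 x = 0 := by
      rw [taylor_within_apply]
      apply Finset.sum_eq_zero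
      intro k hk
      have hk' : k + 1 ≤ s + 1 := Nat.succ_le_succ (Nat.lt_succ_iff.mp (Finset.mem_range.mp hk))
      rw [iDW_congr_set hx1 ⟨le_refl 0, hx⟩, hfdef,
        ← iteratedDerivWithin_succ',
        hg0 (k+1) hk', smul_zero]
    have hD : iteratedDerivWithin (s+1) f (Set.Icc 0 x) x'
        = iteratedDerivWithin (s+1+1) g (Set.Icc 0 1) x' := by
      rw [iDW_congr_set hx1 ⟨hx'.1.le, hx'.2⟩, hfdef,
        ← iteratedDerivWithin_succ']
    rw [hP, sub_zero, sub_zero, hD] at hTay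
    have hbound := hσ x' ⟨hx'.1.le, le_trans hx'.2.le hx1⟩
    rw [div_le_iff₀ hfac] at hbound
    have hfx : |f x| ≤ σr * ((s+1+1).factorial : ℝ) * x ^ (s+1) / ((s+1).factorial : ℝ) := by
      rw [hTay]
      rw [abs_div, abs_mul, abs_pow, abs_of_pos hx, abs_of_pos (show (0:ℝ) < ((s+1).factorial:ℝ) by positivity)]
      apply div_le_div_of_nonneg_right _ (by positivity)
      exact mul_le_mul_of_nonneg_right hbound (by positivity)
    calc |f x| ≤ σr * ((s+1+1).factorial : ℝ) * x ^ (s+1) / ((s+1).factorial : ℝ) := hfx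
      _ = (((s+1:ℕ):ℝ)+1) * σr * x ^ (s+1) := by
        rw [Nat.factorial_succ (s+1)]
        have hne : (((s+1).factorial : ℝ)) ≠ 0 := by positivity
        push_cast
        field_simp

open scoped BigOperators

noncomputable section

/-- `κ_{σ(r)} := κ` if `σ(r) ≤ 1`, and `κ σ(r)` otherwise. -/
def kappaSigma (κ σr : ℝ) : ℝ := if σr ≤ 1 then κ else κ * σr

/-- Graded node `x_j := κσ^{((j/n)-1)/(r+1)}`. -/
def nodeX (κσ : ℝ) (r n j : ℕ) : ℝ := κσ ^ ((((j:ℝ)/(n:ℝ)) - 1)/((r:ℝ)+1))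

/-- under Assumption A(r), for all `n ∈ ℕ`, `κ > 1` and `1 ≤ j ≤ n`,
`q_j = M_j x_{j-1}/g(x_{j-1}) ≤ (r+1) κ_{σ(r)}^{r/(n(r+1))} σ(r)/δ(r)`. -/
theorem stmt_9 (r : ℕ) (g : ℝ → ℝ) (σr δr : ℝ)
    (hgr : ContDiffOn ℝ (r+1) g (Set.Icc 0 1))
    (hmono : StrictMonoOn g (Set.Icc 0 1))
    (hnoinfl : ConvexOn ℝ (Set.Icc 0 1) g ∨ ConcaveOn ℝ (Set.Icc 0 1) g)
    (hg0 : ∀ j ≤ r, iteratedDerivWithin j g (Set.Icc 0 1) 0 = 0)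
    (hgne : ∀ x ∈ Set.Icc (0:ℝ) 1, iteratedDerivWithin (r+1) g (Set.Icc 0 1) x ≠ 0)
    (hσ : IsGreatest
      ((fun x => |iteratedDerivWithin (r+1) g (Set.Icc 0 1) x| / ((r+1).factorial : ℝ)) ''
        Set.Icc 0 1) σr)
    (hδ : IsLeast
      ((fun x => |iteratedDerivWithin (r+1) g (Set.Icc 0 1) x| / ((r+1).factorial : ℝ)) ''
        Set.Icc 0 1) δr) :
    ∀ (n : ℕ), 1 ≤ n → ∀ κ : ℝ, 1 < κ → ∀ j : ℕ, 1 ≤ j → j ≤ n →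
      max |derivWithin g (Set.Icc 0 1) (nodeX (kappaSigma κ σr) r n (j-1))|
          |derivWithin g (Set.Icc 0 1) (nodeX (kappaSigma κ σr) r n j)|
        * nodeX (kappaSigma κ σr) r n (j-1) / g (nodeX (kappaSigma κ σr) r n (j-1))
      ≤ ((r:ℝ)+1) * (kappaSigma κ σr) ^ ((r:ℝ)/((n:ℝ)*((r:ℝ)+1))) * σr / δr := by
  intro n hn κ hκ j hj1 hjn
  -- basic positivity facts
  have hδ_le : ∀ y ∈ Set.Icc (0:ℝ) 1,
      δr ≤ |iteratedDerivWithin (r+1) g (Set.Icc 0 1) y| / ((r+1).factorial : ℝ) :=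
    fun y hy => hδ.2 ⟨y, hy, rfl⟩
  have hσ_ge : ∀ y ∈ Set.Icc (0:ℝ) 1,
      |iteratedDerivWithin (r+1) g (Set.Icc 0 1) y| / ((r+1).factorial : ℝ) ≤ σr :=
    fun y hy => hσ.2 ⟨y, hy, rfl⟩
  have hδpos : 0 < δr := by
    obtain ⟨y, hy, hye⟩ := hδ.1
    rw [← hye]
    have := hgne y hy
    positivity
  have hσδ : δr ≤ σr := hσ.2 hδ.1
  have hσpos : 0 < σr := lt_of_lt_of_le hδpos hσδ
  set κσ := kappaSigma κ σr with hκσdef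
  have hκσ : 1 < κσ := by
    rw [hκσdef, kappaSigma]
    split_ifs with h
    · exact hκ
    · push_neg at h; nlinarith
  have hκσpos : 0 < κσ := lt_trans one_pos hκσ
  have hnpos : (0:ℝ) < n := by exact_mod_cast hn
  have hr1 : (0:ℝ) < (r:ℝ) + 1 := by positivity
  -- the nodes
  set a := nodeX κσ r n (j-1) with hadef
  set b := nodeX κσ r n j with hbdef
  have hjc : ((j-1 : ℕ):ℝ) = (j:ℝ) - 1 := by
    rw [Nat.cast_sub hj1]; norm_num
  have ha_pos : 0 < a := Real.rpow_pos_of_pos hκσpos _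
  have hb_pos : 0 < b := Real.rpow_pos_of_pos hκσpos _
  have hexp_le : ∀ k : ℕ, k ≤ n → ((((k:ℝ)/(n:ℝ)) - 1)/((r:ℝ)+1)) ≤ 0 := by
    intro k hk
    apply div_nonpos_of_nonpos_of_nonneg _ hr1.le
    have : (k:ℝ)/(n:ℝ) ≤ 1 := by
      rw [div_le_one hnpos]; exact_mod_cast hk
    linarith
  have ha1 : a ≤ 1 := Real.rpow_le_one_of_one_le_of_nonpos hκσ.le
    (hexp_le (j-1) (le_trans (Nat.sub_le j 1) hjn))
  have hb1 : b ≤ 1 := Real.rpow_le_one_of_one_le_of_nonpos hκσ.le (hexp_le j hjn)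
  have hab : a ≤ b := by
    apply Real.rpow_le_rpow_of_exponent_le hκσ.le
    have h0 : ((j-1:ℕ):ℝ) ≤ (j:ℝ) := by rw [hjc]; linarith
    gcongr
  -- key ratio identity
  set P := κσ ^ ((r:ℝ)/((n:ℝ)*((r:ℝ)+1))) with hPdef
  have hPpos : 0 < P := Real.rpow_pos_of_pos hκσpos _
  have hbr : b ^ r = P * a ^ r := by
    rw [hbdef, hadef, nodeX, nodeX, ← Real.rpow_natCast (κσ ^ _) r,
      ← Real.rpow_natCast (κσ ^ _) r, ← Real.rpow_mul hκσpos.le, ← Real.rpow_mul hκσpos.le,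
      hPdef, ← Real.rpow_add hκσpos]
    congr 1
    rw [hjc]
    field_simp
    ring
  -- the bounds
  have hga := lower_bd r g δr hgr hmono hg0 hδ_le ha_pos ha1
  have hga_pos : 0 < g a := lt_of_lt_of_le (by positivity) hga
  have hda := deriv_bd r g σr hgr hg0 hσ_ge ha_pos ha1
  have hdb := deriv_bd r g σr hgr hg0 hσ_ge hb_pos hb1
  set M := max |derivWithin g (Set.Icc 0 1) a| |derivWithin g (Set.Icc 0 1) b| with hMdef
  have hMnn : 0 ≤ M := le_trans (abs_nonneg _) (le_max_left _ _)
  have hM : M ≤ ((r:ℝ)+1) * σr * b ^ r := by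
    apply max_le
    · exact le_trans hda (by
        apply mul_le_mul_of_nonneg_left (pow_le_pow_left₀ ha_pos.le hab r) (by positivity))
    · exact hdb
  calc M * a / g a ≤ M * a / (δr * a ^ (r+1)) := by
        apply div_le_div_of_nonneg_left (by positivity) (by positivity) hga
      _ ≤ (((r:ℝ)+1) * σr * b ^ r) * a / (δr * a ^ (r+1)) := by
        gcongr
      _ = ((r:ℝ)+1) * P * σr / δr := by
        rw [hbr, pow_succ]
        have h1 : a ^ r ≠ 0 := by positivity
        have h2 : a ≠ 0 := ne_of_gt ha_pos
        field_simp
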